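/- The disjoint union of three copies of K_4 has no spanning subgraph with exactly three vertices of each of the degrees 0, 1, 2, 3. -/

import Mathlib

open SimpleGraph

/-- The degree of `v` in `H`, as the cardinality of its neighbor set. -/
noncomputable def nDeg {V : Type*} (H : SimpleGraph V) (v : V) : ℕ :=
  (H.neighborSet v).ncard

/-- The number of vertices of degree `k` in `H`. -/
noncomputable def degCount {V : Type*} (H : SimpleGraph V) (k : ℕ) : ℕ :=
  {v | nDeg H v = k}.ncard

def K4 : SimpleGraph (Fin 4) := completeGraph (Fin 4)

def K33 : SimpleGraph (Fin 3 ⊕ Fin 3) := completeBipartiteGraph (Fin 3) (Fin 3)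

/-- The disjoint union of `m` copies of `K₄`. -/
def unionK4 (m : ℕ) : SimpleGraph (Fin m × Fin 4) :=
  SimpleGraph.fromRel (fun p q => p.1 = q.1)

section aux

abbrev VV := Fin 3 × Fin 4

/-- The other vertices in the same copy as `v`. -/
def copySet (v : VV) : Set VV := {q | q.1 = v.1 ∧ q ≠ v}

lemma ncard_copySet (v : VV) : (copySet v).ncard = 3 := by
  have key : ∀ u : VV, (Finset.univ.filter fun q : VV => q.1 = u.1 ∧ q ≠ u).card = 3 := by
    decide
  have heq : copySet v = ↑(Finset.univ.filter fun q : VV => q.1 = v.1 ∧ q ≠ v) := by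
    ext q; simp [copySet]
  rw [heq, Set.ncard_coe_finset, key]

variable {H : SimpleGraph VV} {p q v : VV}

lemma adj_fst (hH : H ≤ unionK4 3) (h : H.Adj p q) : p.1 = q.1 := by
  have h' := hH h
  simp only [unionK4, fromRel_adj] at h'
  rcases h'.2 with h' | h'
  · exact h'
  · exact h'.symm

lemma nbr_subset (hH : H ≤ unionK4 3) (v : VV) : H.neighborSet v ⊆ copySet v := by
  intro q hq
  exact ⟨(adj_fst hH hq).symm, hq.ne'⟩

lemma nDeg_le_three (hH : H ≤ unionK4 3) (v : VV) : nDeg H v ≤ 3 := by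
  have := Set.ncard_le_ncard (nbr_subset hH v) (Set.toFinite _)
  rwa [ncard_copySet] at this

lemma deg3_adj (hH : H ≤ unionK4 3) (h3 : nDeg H v = 3) (hq1 : q.1 = v.1) (hqv : q ≠ v) : H.Adj v q := by
  have heq : H.neighborSet v = copySet v := by
    apply Set.eq_of_subset_of_ncard_le (nbr_subset hH v) _ (Set.toFinite _)
    rw [ncard_copySet]; exact le_of_eq h3.symm
  have : q ∈ H.neighborSet v := heq ▸ ⟨hq1, hqv⟩
  exact this

lemma deg_pos_of_adj (h : H.Adj p q) : 1 ≤ nDeg H q := by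
  have : (H.neighborSet q).Nonempty := ⟨p, h.symm⟩
  exact (Set.ncard_pos (Set.toFinite _)).mpr this

lemma exists_fourth : ∀ p q r : Fin 4, p ≠ q → p ≠ r → q ≠ r →
    ∃ d : Fin 4, d ≠ p ∧ d ≠ q ∧ d ≠ r := by decide

lemma no_five : ∀ p q r s t : Fin 4, p = q ∨ p = r ∨ q = r ∨ s = p ∨ s = q ∨ s = r ∨
    t = p ∨ t = q ∨ t = r ∨ t = s := by decide

end aux

theorem stmt14 :
    ¬ ∃ H ≤ unionK4 3, degCount H 0 = 3 ∧ degCount H 1 = 3 ∧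
      degCount H 2 = 3 ∧ degCount H 3 = 3 := by
  rintro ⟨H, hH, h0, _h1, _h2, h3⟩
  classical
  obtain ⟨a, b, c, hab, hac, hbc, hS3⟩ := Set.ncard_eq_three.mp h3
  obtain ⟨x, y, z, hxy, hxz, hyz, hS0⟩ := Set.ncard_eq_three.mp h0
  -- degree facts for the named vertices
  have da : nDeg H a = 3 := by have : a ∈ {v | nDeg H v = 3} := hS3 ▸ (by simp); exact this
  have db : nDeg H b = 3 := by have : b ∈ {v | nDeg H v = 3} := hS3 ▸ (by simp); exact this
  have dc : nDeg H c = 3 := by have : c ∈ {v | nDeg H v = 3} := hS3 ▸ (by simp); exact this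
  have dx : nDeg H x = 0 := by have : x ∈ {v | nDeg H v = 0} := hS0 ▸ (by simp); exact this
  have dy : nDeg H y = 0 := by have : y ∈ {v | nDeg H v = 0} := hS0 ▸ (by simp); exact this
  have dz : nDeg H z = 0 := by have : z ∈ {v | nDeg H v = 0} := hS0 ▸ (by simp); exact this
  -- a deg-3 vertex and a deg-0 vertex cannot share a copy
  have hdisj : ∀ p q : VV, nDeg H p = 3 → nDeg H q = 0 → p.1 ≠ q.1 := by
    intro p q hp hq heq
    have hpq : q ≠ p := by rintro rfl; rw [hp] at hq; exact (by omega : ¬ (3:ℕ) = 0) hq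
    have := deg_pos_of_adj (deg3_adj hH hp heq.symm hpq)
    omega
  -- Case 1: all three deg-3 vertices in one copy
  by_cases hA : a.1 = b.1 ∧ a.1 = c.1
  · obtain ⟨hab1, hac1⟩ := hA
    have hab2 : a.2 ≠ b.2 := fun h => hab (Prod.ext hab1 h)
    have hac2 : a.2 ≠ c.2 := fun h => hac (Prod.ext hac1 h)
    have hbc2 : b.2 ≠ c.2 := fun h => hbc (Prod.ext (hab1 ▸ hac1) h)
    have hd := exists_fourth
    obtain ⟨d, hda, hdb, hdc⟩ := hd a.2 b.2 c.2 hab2 hac2 hbc2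
    set w : VV := (a.1, d) with hw
    have hwa : w ≠ a := fun h => hda (congrArg Prod.snd h)
    have hwb : w ≠ b := fun h => hdb (congrArg Prod.snd h)
    have hwc : w ≠ c := fun h => hdc (congrArg Prod.snd h)
    have aw : H.Adj a w := deg3_adj hH da rfl hwa
    have bw : H.Adj b w := deg3_adj hH db hab1 hwb
    have cw : H.Adj c w := deg3_adj hH dc hac1 hwc
    have hsub : ({a, b, c} : Set VV) ⊆ H.neighborSet w := by
      rintro u (rfl | rfl | rfl)
      · exact aw.symm
      · exact bw.symm
      · exact cw.symm
    have h3le : 3 ≤ nDeg H w := by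
      have := Set.ncard_le_ncard hsub (Set.toFinite _)
      have h3' : ({a, b, c} : Set VV).ncard = 3 :=
        Set.ncard_eq_three.mpr ⟨a, b, c, hab, hac, hbc, rfl⟩
      rw [h3'] at this; exact this
    have hw3 : nDeg H w = 3 := le_antisymm (nDeg_le_three hH w) h3le
    have : w ∈ ({a, b, c} : Set VV) := hS3 ▸ hw3
    rcases this with h | h | h
    · exact hwa h
    · exact hwb h
    · exact hwc h
  by_cases hB : x.1 = y.1 ∧ x.1 = z.1
  · obtain ⟨hxy1, hxz1⟩ := hB
    have hxy2 : x.2 ≠ y.2 := fun h => hxy (Prod.ext hxy1 h)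
    have hxz2 : x.2 ≠ z.2 := fun h => hxz (Prod.ext hxz1 h)
    have hyz2 : y.2 ≠ z.2 := fun h => hyz (Prod.ext (hxy1 ▸ hxz1) h)
    have hd := exists_fourth
    obtain ⟨d, hdx, hdy, hdz⟩ := hd x.2 y.2 z.2 hxy2 hxz2 hyz2
    set w : VV := (x.1, d) with hw
    have hwx : w ≠ x := fun h => hdx (congrArg Prod.snd h)
    have hwy : w ≠ y := fun h => hdy (congrArg Prod.snd h)
    have hwz : w ≠ z := fun h => hdz (congrArg Prod.snd h)
    -- w has no neighbors
    have hempty : H.neighborSet w = ∅ := by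
      ext u
      simp only [Set.mem_empty_iff_false, iff_false, mem_neighborSet]
      intro hu
      have hu1 : u.1 = x.1 := (adj_fst hH hu).symm
      have hu2 : u.2 ≠ d := by
        intro h
        exact hu.ne' (Prod.ext hu1 h)
      have hupos := deg_pos_of_adj hu
      have hux : u ≠ x := fun h => by rw [h, dx] at hupos; omega
      have huy : u ≠ y := fun h => by rw [h, dy] at hupos; omega
      have huz : u ≠ z := fun h => by rw [h, dz] at hupos; omega
      have hux2 : u.2 ≠ x.2 := fun h => hux (Prod.ext hu1 h)
      have huy2 : u.2 ≠ y.2 := fun h => huy (Prod.ext (hu1.trans hxy1) h)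
      have huz2 : u.2 ≠ z.2 := fun h => huz (Prod.ext (hu1.trans hxz1) h)
      -- five pairwise distinct elements of Fin 4: impossible
      have := no_five x.2 y.2 z.2 d u.2
      tauto
    have hw0 : nDeg H w = 0 := by
      unfold nDeg; rw [hempty]; simp
    have : w ∈ ({x, y, z} : Set VV) := hS0 ▸ hw0
    rcases this with h | h | h
    · exact hwx h
    · exact hwy h
    · exact hwz h
  -- Case 3: pigeonhole on Fin 3
  · have cross : ∀ (u : VV), u ∈ ({a, b, c} : Set VV) → ∀ v ∈ ({x, y, z} : Set VV),
        u.1 ≠ v.1 := by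
      rintro u (rfl | rfl | rfl) v (rfl | rfl | rfl) <;>
        first
          | exact hdisj _ _ da dx | exact hdisj _ _ da dy | exact hdisj _ _ da dz
          | exact hdisj _ _ db dx | exact hdisj _ _ db dy | exact hdisj _ _ db dz
          | exact hdisj _ _ dc dx | exact hdisj _ _ dc dy | exact hdisj _ _ dc dz
    have v1 : (a.1 : ℕ) < 3 := a.1.isLt
    have v2 : (b.1 : ℕ) < 3 := b.1.isLt
    have v3 : (c.1 : ℕ) < 3 := c.1.isLt
    have v4 : (x.1 : ℕ) < 3 := x.1.isLt
    have v5 : (y.1 : ℕ) < 3 := y.1.isLt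
    have v6 : (z.1 : ℕ) < 3 := z.1.isLt
    have ne1 : (a.1 : ℕ) ≠ x.1 := fun h => cross a (by simp) x (by simp) (Fin.ext h)
    have ne2 : (a.1 : ℕ) ≠ y.1 := fun h => cross a (by simp) y (by simp) (Fin.ext h)
    have ne3 : (a.1 : ℕ) ≠ z.1 := fun h => cross a (by simp) z (by simp) (Fin.ext h)
    have ne4 : (b.1 : ℕ) ≠ x.1 := fun h => cross b (by simp) x (by simp) (Fin.ext h)
    have ne5 : (b.1 : ℕ) ≠ y.1 := fun h => cross b (by simp) y (by simp) (Fin.ext h)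
    have ne6 : (b.1 : ℕ) ≠ z.1 := fun h => cross b (by simp) z (by simp) (Fin.ext h)
    have ne7 : (c.1 : ℕ) ≠ x.1 := fun h => cross c (by simp) x (by simp) (Fin.ext h)
    have ne8 : (c.1 : ℕ) ≠ y.1 := fun h => cross c (by simp) y (by simp) (Fin.ext h)
    have ne9 : (c.1 : ℕ) ≠ z.1 := fun h => cross c (by simp) z (by simp) (Fin.ext h)
    have dA : (a.1 : ℕ) ≠ b.1 ∨ (a.1 : ℕ) ≠ c.1 := by
      by_contra h
      push_neg at h
      exact hA ⟨Fin.ext h.1, Fin.ext h.2⟩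
    have dB : (x.1 : ℕ) ≠ y.1 ∨ (x.1 : ℕ) ≠ z.1 := by
      by_contra h
      push_neg at h
      exact hB ⟨Fin.ext h.1, Fin.ext h.2⟩
    omega
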